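/- arXiv:1608.05217 — 5 statements merged into one kernel-verified Lean document; each statement's English description precedes it below -/
import Mathlib

section
/- For all x ≥ 0, it holds that 1/(√(2π)(1+x)) ≤ (1 - Φ(x))·exp(x²/2) ≤ 1/(√π(1+x)), where Φ is the standard normal distribution function. -/
open MeasureTheory Real

noncomputable def stdNormalCDF (x : ℝ) : ℝ :=
  ∫ t in Set.Iic x, Real.exp (-t ^ 2 / 2) / Real.sqrt (2 * Real.pi)

open MeasureTheory Real Filter Set Topology

noncomputable def gg (t : ℝ) : ℝ := Real.exp (-t ^ 2 / 2)

lemma gg_cont : Continuous gg := by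
  unfold gg; fun_prop

lemma gg_pos (t : ℝ) : 0 < gg t := Real.exp_pos _

lemma gg_eq : gg = fun t => Real.exp (-(1/2) * t ^ 2) := by
  funext t; unfold gg; ring_nf

lemma gg_integrable : Integrable gg := by
  rw [gg_eq]; exact integrable_exp_neg_mul_sq (by norm_num)

lemma integral_gg : ∫ t, gg t = Real.sqrt (2 * π) := by
  rw [gg_eq, integral_gaussian, show π / (1/2) = 2 * π by ring]

lemma hasDerivAt_gg (x : ℝ) : HasDerivAt gg (-x * gg x) x := by
  have h1 : HasDerivAt (fun t : ℝ => -t ^ 2 / 2) (-x) x := by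
    have := ((hasDerivAt_pow 2 x).neg).div_const 2
    simpa using this.congr_deriv (by ring)
  have := h1.exp
  unfold gg
  convert this using 1
  ring

noncomputable def TT (x : ℝ) : ℝ := ∫ t in Set.Ioi x, gg t

lemma TT_eq (x : ℝ) : TT x = (∫ t, gg t) - ∫ t in Set.Iic x, gg t := by
  rw [← intervalIntegral.integral_Iic_add_Ioi (gg_integrable.integrableOn) (gg_integrable.integrableOn)]
  unfold TT; ring

lemma TT_eq' (x : ℝ) : TT x = ((∫ t, gg t) - ∫ t in Set.Iic 0, gg t) - ∫ t in (0:ℝ)..x, gg t := by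
  rw [TT_eq, ← intervalIntegral.integral_Iic_sub_Iic gg_integrable.integrableOn
      gg_integrable.integrableOn]
  ring

lemma hasDerivAt_TT (x : ℝ) : HasDerivAt TT (-gg x) x := by
  have h : HasDerivAt (fun u => ∫ t in (0:ℝ)..u, gg t) (gg x) x :=
    intervalIntegral.integral_hasDerivAt_right (gg_cont.intervalIntegrable _ _)
      gg_cont.stronglyMeasurable.stronglyMeasurableAtFilter gg_cont.continuousAt
  have := (hasDerivAt_const x ((∫ t, gg t) - ∫ t in Set.Iic 0, gg t)).sub h
  simp only [zero_sub] at this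
  exact this.congr_of_eventuallyEq (by filter_upwards with y using (TT_eq' y))

lemma TT_tendsto : Tendsto TT atTop (𝓝 0) := by
  have h : Tendsto (fun x => ∫ t in (0:ℝ)..x, gg t) atTop (𝓝 (∫ t in Set.Ioi 0, gg t)) :=
    intervalIntegral_tendsto_integral_Ioi 0 gg_integrable.integrableOn tendsto_id
  have h2 : Tendsto (fun x => ((∫ t, gg t) - ∫ t in Set.Iic 0, gg t) - ∫ t in (0:ℝ)..x, gg t)
      atTop (𝓝 (((∫ t, gg t) - ∫ t in Set.Iic 0, gg t) - ∫ t in Set.Ioi 0, gg t)) :=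
    (tendsto_const_nhds).sub h
  have h3 : ((∫ t, gg t) - ∫ t in Set.Iic 0, gg t) - ∫ t in Set.Ioi 0, gg t = 0 := by
    rw [← intervalIntegral.integral_Iic_add_Ioi (gg_integrable.integrableOn) (gg_integrable.integrableOn)]
    ring
  rw [← h3]
  exact h2.congr (fun y => (TT_eq' y).symm)

lemma gg_tendsto : Tendsto (fun x => gg x / (1 + x)) atTop (𝓝 0) := by
  have h1 : Tendsto gg atTop (𝓝 0) := by
    rw [gg_eq]
    have : Tendsto (fun x : ℝ => -(1/2) * x ^ 2) atTop atBot := by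
      apply Tendsto.const_mul_atTop_of_neg (by norm_num)
      exact tendsto_pow_atTop (by norm_num)
    exact Real.tendsto_exp_atBot.comp this
  have h2 : Tendsto (fun x : ℝ => (1 + x)⁻¹) atTop (𝓝 0) := by
    apply Tendsto.inv_tendsto_atTop
    exact tendsto_atTop_add_const_left _ _ tendsto_id
  simpa [div_eq_mul_inv] using h1.mul h2

lemma hasDerivAt_ratio (x : ℝ) (hx : 0 ≤ x) :
    HasDerivAt (fun y => gg y / (1 + y))
      ((-x * gg x * (1 + x) - gg x) / (1 + x) ^ 2) x := by
  have h1 : HasDerivAt (fun y : ℝ => 1 + y) 1 x := by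
    simpa using (hasDerivAt_id x).const_add 1
  have := (hasDerivAt_gg x).div h1 (by positivity)
  exact this.congr_deriv (by ring)

lemma nonneg_aux {f : ℝ → ℝ} {f' : ℝ → ℝ}
    (hderiv : ∀ y : ℝ, 0 ≤ y → HasDerivAt f (f' y) y)
    (hnonpos : ∀ y : ℝ, 0 ≤ y → f' y ≤ 0)
    (hlim : Tendsto f atTop (𝓝 0)) {x : ℝ} (hx : 0 ≤ x) : 0 ≤ f x := by
  have hanti : AntitoneOn f (Set.Ici 0) := by
    apply antitoneOn_of_deriv_nonpos (convex_Ici 0)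
    · intro y hy
      exact ((hderiv y hy).continuousAt).continuousWithinAt
    · intro y hy
      rw [interior_Ici] at hy
      exact ((hderiv y (le_of_lt hy)).differentiableAt).differentiableWithinAt
    · intro y hy
      rw [interior_Ici] at hy
      rw [(hderiv y (le_of_lt hy)).deriv]
      exact hnonpos y (le_of_lt hy)
  refine le_of_tendsto hlim ?_
  filter_upwards [eventually_ge_atTop x] with y hy
  exact hanti (Set.mem_Ici.2 hx) (Set.mem_Ici.2 (hx.trans hy)) hy

lemma V_nonneg (x : ℝ) (hx : 0 ≤ x) : gg x / (1 + x) ≤ TT x := by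
  have key : 0 ≤ TT x - gg x / (1 + x) := by
    apply nonneg_aux (f' := fun y => -gg y - (-y * gg y * (1 + y) - gg y) / (1 + y) ^ 2)
        (fun y hy => (hasDerivAt_TT y).sub (hasDerivAt_ratio y hy)) ?_ ?_ hx
    · intro y hy
      have h1 : (0:ℝ) < 1 + y := by linarith
      have h2 : 0 < gg y := gg_pos y
      have heq : -gg y - (-y * gg y * (1 + y) - gg y) / (1 + y) ^ 2
          = -(y * gg y) / (1 + y) ^ 2 := by field_simp; ring
      rw [heq]
      apply div_nonpos_of_nonpos_of_nonneg _ (by positivity)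
      simp only [neg_nonpos]
      positivity
    · have := TT_tendsto.sub gg_tendsto
      simp only [sub_zero] at this
      exact this
  linarith

lemma W_nonneg (x : ℝ) (hx : 0 ≤ x) : TT x ≤ Real.sqrt 2 * gg x / (1 + x) := by
  have key : 0 ≤ Real.sqrt 2 * (gg x / (1 + x)) - TT x := by
    apply nonneg_aux
        (f' := fun y => Real.sqrt 2 * ((-y * gg y * (1 + y) - gg y) / (1 + y) ^ 2) - -gg y)
        (fun y hy => ((hasDerivAt_ratio y hy).const_mul _).sub (hasDerivAt_TT y)) ?_ ?_ hx
    · intro y hy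
      have h1 : (0:ℝ) < 1 + y := by linarith
      have h2 : 0 < gg y := gg_pos y
      have hs2 : (Real.sqrt 2) ^ 2 = 2 := Real.sq_sqrt (by norm_num)
      have hs0 : (0:ℝ) ≤ Real.sqrt 2 := Real.sqrt_nonneg 2
      have hsle : Real.sqrt 2 ≤ 1.42 := by nlinarith [sq_nonneg (Real.sqrt 2 - 1.42)]
      have hsge : (1.41:ℝ) ≤ Real.sqrt 2 := by nlinarith [sq_nonneg (Real.sqrt 2 - 1.41)]
      have hgoal : gg y * ((1 + y)^2 - Real.sqrt 2 * (y^2 + y + 1)) ≤ 0 := by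
        have : (1 + y)^2 ≤ Real.sqrt 2 * (y^2 + y + 1) := by nlinarith [sq_nonneg (y - 1)]
        nlinarith
      have hexp : Real.sqrt 2 * ((-y * gg y * (1 + y) - gg y) / (1 + y) ^ 2) - -gg y
          = gg y * ((1 + y)^2 - Real.sqrt 2 * (y^2 + y + 1)) / (1 + y)^2 := by
        field_simp
        ring
      rw [hexp]
      exact div_nonpos_of_nonpos_of_nonneg hgoal (by positivity)
    · have := gg_tendsto.const_mul (Real.sqrt 2)
      have := this.sub TT_tendsto
      simp only [mul_zero, sub_zero] at this
      exact this
  have : Real.sqrt 2 * (gg x / (1 + x)) = Real.sqrt 2 * gg x / (1 + x) := by ring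
  linarith

lemma one_sub_cdf (x : ℝ) : 1 - stdNormalCDF x = TT x / Real.sqrt (2 * π) := by
  have hs : (0:ℝ) < Real.sqrt (2 * π) := Real.sqrt_pos.2 (by positivity)
  have h1 : stdNormalCDF x = (∫ t in Set.Iic x, gg t) / Real.sqrt (2 * π) := by
    unfold stdNormalCDF gg
    rw [integral_div]
  rw [h1, TT_eq, integral_gg, sub_div, div_self hs.ne']

theorem stmt_0 (x : ℝ) (hx : 0 ≤ x) :
    1 / (Real.sqrt (2 * Real.pi) * (1 + x)) ≤ (1 - stdNormalCDF x) * Real.exp (x ^ 2 / 2) ∧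
    (1 - stdNormalCDF x) * Real.exp (x ^ 2 / 2) ≤ 1 / (Real.sqrt Real.pi * (1 + x)) := by
  have hs : (0:ℝ) < Real.sqrt (2 * π) := Real.sqrt_pos.2 (by positivity)
  have hπ : (0:ℝ) < Real.sqrt π := Real.sqrt_pos.2 Real.pi_pos
  have h1x : (0:ℝ) < 1 + x := by linarith
  have he : (0:ℝ) < Real.exp (x ^ 2 / 2) := Real.exp_pos _
  have hge : gg x * Real.exp (x ^ 2 / 2) = 1 := by
    unfold gg; rw [← Real.exp_add, show -x ^ 2 / 2 + x ^ 2 / 2 = 0 by ring, Real.exp_zero]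
  have hsπ : Real.sqrt (2 * π) = Real.sqrt 2 * Real.sqrt π :=
    Real.sqrt_mul (by norm_num) π
  have hV := V_nonneg x hx
  have hW := W_nonneg x hx
  rw [one_sub_cdf]
  constructor
  · rw [div_le_iff₀ (by positivity)]
    have heq : TT x / Real.sqrt (2 * π) * Real.exp (x ^ 2 / 2) * (Real.sqrt (2 * π) * (1 + x))
        = TT x * Real.exp (x ^ 2 / 2) * (1 + x) := by
      field_simp
    rw [heq]
    have hV' : gg x ≤ TT x * (1 + x) := by
      rw [div_le_iff₀ h1x] at hV; linarith
    nlinarith [mul_le_mul_of_nonneg_right hV' he.le]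
  · have heq : TT x / Real.sqrt (2 * π) * Real.exp (x ^ 2 / 2)
        = TT x * Real.exp (x ^ 2 / 2) / Real.sqrt (2 * π) := by ring
    rw [heq, div_le_div_iff₀ hs (by positivity)]
    have hW' : TT x * (1 + x) ≤ Real.sqrt 2 * gg x := by
      rw [le_div_iff₀ h1x] at hW; linarith
    have h2 : TT x * (1 + x) * Real.exp (x ^ 2 / 2) ≤ Real.sqrt 2 := by
      nlinarith [mul_le_mul_of_nonneg_right hW' he.le]
    nlinarith [mul_le_mul_of_nonneg_right h2 hπ.le]
end

section
/- Let (ξ_i, F_i)_{i=1,…,n} be a martingale difference sequence satisfying the conditional Bernstein condition with parameter ε ∈ (0, 1/2], and suppose |⟨S⟩_n − 1| ≤ δ² a.s. for some δ ∈ [0,1]. Then for all 0 ≤ λ < ε^{-1}, the drift B_n(λ) = ∑_{i=1}^n E_λ[ξ_i | F_{i-1}] (where E_λ denotes expectation under the conjugate measure dP_λ = Z_n(λ) dP with Z_n(λ) = ∏_{i=1}^n e^{λξ_i}/E[e^{λξ_i}|F_{i-1}]) satisfies B_n(λ) ≤ ((λ − 0.5λ²ε)/(1 − λε)²)(1 +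 δ²) almost surely. -/
open MeasureTheory ProbabilityTheory Real Filter

set_option maxHeartbeats 1000000

lemma aux_id (x : ℝ) (N : ℕ) :
    (1 - x) ^ 2 * ∑ j ∈ Finset.range N, ((j : ℝ) + 2) * x ^ j
      = 2 - x - x ^ N * (((N : ℝ) + 2) - ((N : ℝ) + 1) * x) := by
  induction N with
  | zero => simp
  | succ N ih =>
      rw [Finset.sum_range_succ, mul_add, ih]
      push_cast
      ring

lemma aux_sum {x : ℝ} (hx0 : 0 ≤ x) (hx1 : x < 1) (N : ℕ) :
    ∑ j ∈ Finset.range N, ((j : ℝ) + 2) * x ^ j ≤ (2 - x) / (1 - x) ^ 2 := by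
  have hpos : (0:ℝ) < (1 - x) ^ 2 := by
    have : (0:ℝ) < 1 - x := by linarith
    positivity
  rw [le_div_iff₀ hpos, mul_comm, aux_id]
  have h1 : (0:ℝ) ≤ x ^ N * (((N : ℝ) + 2) - ((N : ℝ) + 1) * x) := by
    apply mul_nonneg (by positivity)
    nlinarith [hx1.le, hx0, Nat.cast_nonneg (α := ℝ) N]
  linarith

lemma aux_c {lam ε : ℝ} (hlam : 0 ≤ lam) (hε : 0 < ε) (hx : lam * ε < 1) (N : ℕ) :
    ∑ i ∈ Finset.range N, (1/2) * ((i : ℝ) + 2) * lam ^ (i+1) * ε ^ i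
      ≤ (lam - 0.5 * lam ^ 2 * ε) / (1 - lam * ε) ^ 2 := by
  have hx0 : 0 ≤ lam * ε := mul_nonneg hlam hε.le
  have h1 : ∀ i : ℕ, (1/2 : ℝ) * ((i : ℝ) + 2) * lam ^ (i+1) * ε ^ i
      = (lam / 2) * (((i : ℝ) + 2) * (lam * ε) ^ i) := by
    intro i; rw [mul_pow, pow_succ]; ring
  simp_rw [h1, ← Finset.mul_sum]
  have h2 : (lam - 0.5 * lam ^ 2 * ε) / (1 - lam * ε) ^ 2
      = (lam / 2) * ((2 - lam * ε) / (1 - lam * ε) ^ 2) := by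
    have hne : ((1:ℝ) - lam * ε) ^ 2 ≠ 0 := by
      have : (0:ℝ) < 1 - lam * ε := by linarith
      positivity
    field_simp
    ring
  rw [h2]
  exact mul_le_mul_of_nonneg_left (aux_sum hx0 hx N) (by positivity)

lemma aux_c_nonneg {lam ε : ℝ} (hlam : 0 ≤ lam) (hε : 0 < ε) (hx : lam * ε < 1) :
    0 ≤ (lam - 0.5 * lam ^ 2 * ε) / (1 - lam * ε) ^ 2 := by
  apply div_nonneg _ (by positivity)
  nlinarith

lemma tim_aux {Ω : Type*} [MeasurableSpace Ω] (μ : Measure Ω) (F : ℕ → Ω → ℝ) (G : Ω → ℝ)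
    (hmf : ∀ N, AEStronglyMeasurable (F N) μ) (hmg : AEStronglyMeasurable G μ)
    (hcond : Filter.Tendsto (fun N => eLpNorm (F N - G) 1 μ) Filter.atTop (nhds 0)) :
    TendstoInMeasure μ F Filter.atTop G :=
  tendstoInMeasure_of_tendsto_eLpNorm_of_ne_top one_ne_zero ENNReal.one_ne_top hmf hmg hcond

lemma key {Ω : Type*} [inst : MeasurableSpace Ω] (μ : Measure Ω) [IsProbabilityMeasure μ]
    (m : MeasurableSpace Ω) (hm : m ≤ inst) (X : Ω → ℝ)
    (hint : ∀ k : ℕ, Integrable (fun ω => X ω ^ k) μ)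
    (hintmexp : ∀ c : ℝ, Integrable (fun ω => X ω * Real.exp (c * X ω)) μ)
    (hmd : μ[X | m] =ᵐ[μ] 0)
    {ε lam : ℝ} (hε : 0 < ε) (hlam : 0 ≤ lam) (hx : lam * ε < 1)
    (hbern : ∀ k, 2 ≤ k → ∀ᵐ ω ∂μ, |(μ[(fun ω' => X ω' ^ k) | m]) ω|
        ≤ (1 / 2) * (Nat.factorial k) * ε ^ (k - 2) * (μ[(fun ω' => X ω' ^ 2) | m]) ω) :
    ∀ᵐ ω ∂μ, (μ[(fun ω' => X ω' * Real.exp (lam * X ω')) | m]) ω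
        ≤ ((lam - 0.5 * lam ^ 2 * ε) / (1 - lam * ε) ^ 2) * (μ[(fun ω' => X ω' ^ 2) | m]) ω := by
  letI := inst
  set c : ℝ := (lam - 0.5 * lam ^ 2 * ε) / (1 - lam * ε) ^ 2 with hc
  have hcnn : 0 ≤ c := aux_c_nonneg hlam hε hx
  set g : Ω → ℝ := fun ω => X ω * Real.exp (lam * X ω) with hg
  set f : ℕ → Ω → ℝ :=
    fun N ω => ∑ j ∈ Finset.range N, lam ^ j / (j.factorial : ℝ) * X ω ^ (j+1) with hf
  have hgint : Integrable g μ := hintmexp lam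
  have hfint : ∀ N, Integrable (f N) μ := by
    intro N
    exact integrable_finset_sum _ (fun j _ => (hint (j+1)).const_mul _)
  have hXmeas : AEStronglyMeasurable X μ := by simpa using (hint 1).1
  -- pointwise convergence
  have hptwise : ∀ ω, Tendsto (fun N => f N ω) atTop (nhds (g ω)) := by
    intro ω
    have h1 : HasSum (fun j : ℕ => (lam * X ω) ^ j / (j.factorial : ℝ))
        (Real.exp (lam * X ω)) := by
      rw [Real.exp_eq_exp_ℝ]
      exact NormedSpace.expSeries_div_hasSum_exp (lam * X ω)
    have h2 := h1.mul_left (X ω)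
    have h3 : (fun j : ℕ => X ω * ((lam * X ω) ^ j / (j.factorial : ℝ)))
        = fun j : ℕ => lam ^ j / (j.factorial : ℝ) * X ω ^ (j+1) := by
      funext j; rw [mul_pow, pow_succ]; ring
    rw [h3] at h2
    exact h2.tendsto_sum_nat
  -- dominating function
  set B : Ω → ℝ := fun ω => |X ω| * Real.exp (lam * |X ω|) with hB
  have hBnn : ∀ ω, 0 ≤ B ω := fun ω => mul_nonneg (abs_nonneg _) (Real.exp_pos _).le
  have hBint : Integrable B μ := by
    have h1 := (hintmexp lam).abs
    have h2 := (hintmexp (-lam)).abs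
    refine Integrable.mono' (h1.add h2) ?_ (Filter.Eventually.of_forall fun ω => ?_)
    · have habs : AEStronglyMeasurable (fun ω => |X ω|) μ :=
        continuous_abs.comp_aestronglyMeasurable hXmeas
      exact habs.mul
        ((Real.continuous_exp.comp (continuous_const.mul continuous_id)).comp_aestronglyMeasurable
          habs)
    · rw [Real.norm_eq_abs, abs_of_nonneg (hBnn ω)]
      have hcases : lam * |X ω| = lam * X ω ∨ lam * |X ω| = -lam * X ω := by
        rcases abs_cases (X ω) with ⟨h, _⟩ | ⟨h, _⟩
        · left; rw [h]
        · right; rw [h]; ring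
      have hexp : Real.exp (lam * |X ω|) ≤ Real.exp (lam * X ω) + Real.exp (-lam * X ω) := by
        rcases hcases with h | h <;> rw [h] <;>
          [linarith [(Real.exp_pos (-lam * X ω)).le]; linarith [(Real.exp_pos (lam * X ω)).le]]
      calc |X ω| * Real.exp (lam * |X ω|)
          ≤ |X ω| * (Real.exp (lam * X ω) + Real.exp (-lam * X ω)) :=
            mul_le_mul_of_nonneg_left hexp (abs_nonneg _)
        _ = |X ω| * Real.exp (lam * X ω) + |X ω| * Real.exp (-lam * X ω) := by ring
        _ ≤ |X ω * Real.exp (lam * X ω)| + |X ω * Real.exp (-lam * X ω)| := by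
            rw [abs_mul, abs_mul, abs_of_pos (Real.exp_pos _), abs_of_pos (Real.exp_pos _)]
  have hfB : ∀ N ω, |f N ω| ≤ B ω := by
    intro N ω
    calc |f N ω| ≤ ∑ j ∈ Finset.range N, |lam ^ j / (j.factorial : ℝ) * X ω ^ (j+1)| :=
          Finset.abs_sum_le_sum_abs _ _
      _ = |X ω| * ∑ j ∈ Finset.range N, (lam * |X ω|) ^ j / (j.factorial : ℝ) := by
          rw [Finset.mul_sum]
          refine Finset.sum_congr rfl fun j _ => ?_
          rw [abs_mul, abs_div, abs_pow, abs_pow, Nat.abs_cast, abs_of_nonneg hlam,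
            mul_pow, pow_succ]
          ring
      _ ≤ B ω := mul_le_mul_of_nonneg_left
          (Real.sum_le_exp_of_nonneg (mul_nonneg hlam (abs_nonneg _)) N) (abs_nonneg _)
  have hgB : ∀ ω, |g ω| ≤ B ω := by
    intro ω
    rw [hg, abs_mul, abs_of_pos (Real.exp_pos _)]
    exact mul_le_mul_of_nonneg_left
      (Real.exp_le_exp.2 (mul_le_mul_of_nonneg_left (le_abs_self _) hlam)) (abs_nonneg _)
  -- L1 convergence
  have hL1 : Tendsto (fun N => eLpNorm (f N - g) 1 μ) atTop (nhds 0) := by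
    have heq : ∀ N, eLpNorm (f N - g) 1 μ = ∫⁻ ω, (‖f N ω - g ω‖₊ : ENNReal) ∂μ := by
      intro N; rw [eLpNorm_one_eq_lintegral_enorm]; rfl
    simp_rw [heq]
    have h0 : (0 : ENNReal) = ∫⁻ _ω, (0 : ENNReal) ∂μ := by simp
    rw [h0]
    refine tendsto_lintegral_of_dominated_convergence' (fun ω => ENNReal.ofReal (2 * B ω))
      (fun N => ((hfint N).sub hgint).aestronglyMeasurable.enorm) ?_ ?_ ?_
    · intro N
      refine Filter.Eventually.of_forall fun ω => ?_
      calc (‖f N ω - g ω‖₊ : ENNReal) = ENNReal.ofReal |f N ω - g ω| := by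
            rw [← Real.norm_eq_abs, ofReal_norm_eq_enorm, enorm_eq_nnnorm]
        _ ≤ ENNReal.ofReal (2 * B ω) := by
            apply ENNReal.ofReal_le_ofReal
            calc |f N ω - g ω| ≤ |f N ω| + |g ω| := abs_sub _ _
              _ ≤ 2 * B ω := by linarith [hfB N ω, hgB ω]
    · have := (hBint.const_mul 2).hasFiniteIntegral
      rw [HasFiniteIntegral] at this
      refine ne_of_lt (lt_of_le_of_lt (lintegral_mono fun ω => ?_) this)
      exact Real.ofReal_le_enorm _
    · refine Filter.Eventually.of_forall fun ω => ?_
      have h1 : Tendsto (fun N => f N ω - g ω) atTop (nhds 0) := by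
        simpa using (hptwise ω).sub (tendsto_const_nhds (x := g ω))
      have h2 : Tendsto (fun N => (‖f N ω - g ω‖₊ : ENNReal)) atTop (nhds (‖(0:ℝ)‖₊ : ENNReal)) :=
        (ENNReal.tendsto_coe.2 (continuous_nnnorm.tendsto _ |>.comp h1))
      simpa using h2
  -- condexp L1 convergence
  have hcond : Tendsto (fun N => eLpNorm (μ[f N | m] - μ[g | m]) 1 μ) atTop (nhds 0) := by
    refine tendsto_of_tendsto_of_tendsto_of_le_of_le (tendsto_const_nhds) hL1
      (fun N => zero_le) (fun N => ?_)
    calc eLpNorm (μ[f N | m] - μ[g | m]) 1 μ = eLpNorm (μ[f N - g | m]) 1 μ :=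
          eLpNorm_congr_ae (condExp_sub (hfint N) hgint m).symm
      _ ≤ eLpNorm (f N - g) 1 μ := eLpNorm_one_condExp_le_eLpNorm _
  have hTIM : TendstoInMeasure μ (fun N => μ[f N | m]) atTop (μ[g | m]) := by
    refine @tim_aux Ω inst μ _ _ ?_ ?_ hcond
    · exact fun N => (stronglyMeasurable_condExp.mono hm).aestronglyMeasurable
    · exact (stronglyMeasurable_condExp.mono hm).aestronglyMeasurable
  obtain ⟨ns, _, hns⟩ := hTIM.exists_seq_tendsto_ae
  -- a.e. facts
  have E1 : ∀ᵐ ω ∂μ, ∀ N : ℕ, (μ[f N | m]) ω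
      = ∑ j ∈ Finset.range N, (μ[(lam ^ j / (j.factorial : ℝ)) •
          (fun ω' => X ω' ^ (j+1)) | m]) ω := by
    rw [ae_all_iff]
    intro N
    have h1 : f N = ∑ j ∈ Finset.range N,
        (lam ^ j / (j.factorial : ℝ)) • (fun ω' => X ω' ^ (j+1)) := by
      funext ω
      rw [Finset.sum_apply]
      exact Finset.sum_congr rfl fun j _ => rfl
    have h2 := condExp_finsetSum
      (f := fun j : ℕ => (lam ^ j / (j.factorial : ℝ)) • (fun ω' => X ω' ^ (j+1)))
      (s := Finset.range N) (μ := μ) (m := m)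
      (fun j _ => ((hint (j+1)).smul _))
    rw [h1]
    filter_upwards [h2] with ω hω
    rw [hω, Finset.sum_apply]
  have E2 : ∀ᵐ ω ∂μ, ∀ j : ℕ, (μ[(lam ^ j / (j.factorial : ℝ)) •
      (fun ω' => X ω' ^ (j+1)) | m]) ω
      = lam ^ j / (j.factorial : ℝ) * (μ[(fun ω' => X ω' ^ (j+1)) | m]) ω := by
    rw [ae_all_iff]
    intro j
    filter_upwards [condExp_smul (μ := μ) (m := m) (lam ^ j / (j.factorial : ℝ))
      (fun ω' => X ω' ^ (j+1))] with ω hω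
    rw [hω]; rfl
  have E3 : ∀ᵐ ω ∂μ, (μ[(fun ω' => X ω' ^ 1) | m]) ω = 0 := by
    have h1 : (fun ω' => X ω' ^ 1) = X := by funext ω'; rw [pow_one]
    rw [h1]
    filter_upwards [hmd] with ω hω using hω
  have E4 : ∀ᵐ ω ∂μ, ∀ i : ℕ, |(μ[(fun ω' => X ω' ^ (i+2)) | m]) ω|
      ≤ (1 / 2) * ((i+2).factorial : ℝ) * ε ^ i * (μ[(fun ω' => X ω' ^ 2) | m]) ω := by
    rw [ae_all_iff]
    intro i
    have := hbern (i+2) (by omega)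
    simpa using this
  have E5 : ∀ᵐ ω ∂μ, 0 ≤ (μ[(fun ω' => X ω' ^ 2) | m]) ω :=
    condExp_nonneg (Filter.Eventually.of_forall fun ω => sq_nonneg _)
  filter_upwards [E1, E2, E3, E4, E5, hns] with ω h1 h2 h3 h4 h5 h6
  refine le_of_tendsto h6 (Filter.Eventually.of_forall fun k => ?_)
  set N := ns k
  rw [h1 N]
  have hbound : ∀ M : ℕ, ∑ j ∈ Finset.range M, (μ[(lam ^ j / (j.factorial : ℝ)) •
      (fun ω' => X ω' ^ (j+1)) | m]) ω ≤ c * (μ[(fun ω' => X ω' ^ 2) | m]) ω := by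
    intro M
    match M with
    | 0 => simpa using mul_nonneg hcnn h5
    | (M+1) =>
      rw [Finset.sum_range_succ']
      have hzero : (μ[(lam ^ 0 / ((0:ℕ).factorial : ℝ)) • (fun ω' => X ω' ^ 1) | m]) ω = 0 := by
        rw [h2 0, h3]; ring
      rw [hzero, add_zero]
      calc ∑ i ∈ Finset.range M, (μ[(lam ^ (i+1) / ((i+1).factorial : ℝ)) •
            (fun ω' => X ω' ^ (i+2)) | m]) ω
          ≤ ∑ i ∈ Finset.range M,
              (1/2) * ((i : ℝ) + 2) * lam ^ (i+1) * ε ^ i * (μ[(fun ω' => X ω' ^ 2) | m]) ω := by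
            refine Finset.sum_le_sum fun i _ => ?_
            rw [h2 (i+1)]
            have hco : 0 ≤ lam ^ (i+1) / ((i+1).factorial : ℝ) := by positivity
            calc lam ^ (i+1) / ((i+1).factorial : ℝ) * (μ[(fun ω' => X ω' ^ (i+2)) | m]) ω
                ≤ lam ^ (i+1) / ((i+1).factorial : ℝ) *
                    ((1 / 2) * ((i+2).factorial : ℝ) * ε ^ i * (μ[(fun ω' => X ω' ^ 2) | m]) ω) :=
                  mul_le_mul_of_nonneg_left ((le_abs_self _).trans (h4 i)) hco
              _ = (1/2) * ((i : ℝ) + 2) * lam ^ (i+1) * ε ^ i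
                    * (μ[(fun ω' => X ω' ^ 2) | m]) ω := by
                  have hfac : ((i+2).factorial : ℝ) = ((i : ℝ) + 2) * ((i+1).factorial : ℝ) := by
                    rw [show i + 2 = (i+1) + 1 by ring, Nat.factorial_succ]
                    push_cast; ring
                  have hne : ((i+1).factorial : ℝ) ≠ 0 := by
                    exact_mod_cast (Nat.factorial_pos (i+1)).ne'
                  rw [hfac, div_mul_eq_mul_div, div_eq_iff hne]
                  ring
        _ = (∑ i ∈ Finset.range M, (1/2) * ((i : ℝ) + 2) * lam ^ (i+1) * ε ^ i)
              * (μ[(fun ω' => X ω' ^ 2) | m]) ω := by rw [Finset.sum_mul]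
        _ ≤ c * (μ[(fun ω' => X ω' ^ 2) | m]) ω :=
            mul_le_mul_of_nonneg_right (aux_c hlam hε hx M) h5
  exact hbound N

theorem stmt_3 {Ω : Type*} [MeasurableSpace Ω] (μ : Measure Ω) [IsProbabilityMeasure μ]
    (n : ℕ) (ℱ : ℕ → MeasurableSpace Ω) (hmono : Monotone ℱ) (hle : ∀ i, ℱ i ≤ ‹MeasurableSpace Ω›)
    (ξ : ℕ → Ω → ℝ)
    (hadapt : ∀ i, StronglyMeasurable[ℱ i] (ξ i))
    (hint : ∀ i k, Integrable (fun ω => ξ i ω ^ (k : ℕ)) μ)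
    (hintexp : ∀ i (c : ℝ), Integrable (fun ω => Real.exp (c * ξ i ω)) μ)
    (hintmexp : ∀ i (c : ℝ), Integrable (fun ω => ξ i ω * Real.exp (c * ξ i ω)) μ)
    (hmd : ∀ i ∈ Finset.Icc 1 n, μ[ξ i | ℱ (i - 1)] =ᵐ[μ] 0)
    (ε : ℝ) (hε : 0 < ε) (hε2 : ε ≤ 1 / 2)
    (hbern : ∀ k, 2 ≤ k → ∀ i ∈ Finset.Icc 1 n,
      ∀ᵐ ω ∂μ, |(μ[(fun ω' => ξ i ω' ^ k) | ℱ (i - 1)]) ω|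
        ≤ (1 / 2) * (Nat.factorial k) * ε ^ (k - 2) * (μ[(fun ω' => ξ i ω' ^ 2) | ℱ (i - 1)]) ω)
    (δ : ℝ) (hδ0 : 0 ≤ δ) (hδ1 : δ ≤ 1)
    (hA2 : ∀ᵐ ω ∂μ,
      |(∑ i ∈ Finset.Icc 1 n, (μ[(fun ω' => ξ i ω' ^ 2) | ℱ (i - 1)]) ω) - 1| ≤ δ ^ 2)
    (lam : ℝ) (hlam : 0 ≤ lam) (hlamε : lam < ε⁻¹) :
    ∀ᵐ ω ∂μ,
      ∑ i ∈ Finset.Icc 1 n,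
        (μ[(fun ω' => ξ i ω' * Real.exp (lam * ξ i ω')) | ℱ (i - 1)]) ω /
          (μ[(fun ω' => Real.exp (lam * ξ i ω')) | ℱ (i - 1)]) ω
      ≤ ((lam - 0.5 * lam ^ 2 * ε) / (1 - lam * ε) ^ 2) * (1 + δ ^ 2) := by
  have hx : lam * ε < 1 := by
    have := mul_lt_mul_of_pos_right hlamε hε
    rwa [inv_mul_cancel₀ hε.ne'] at this
  set c : ℝ := (lam - 0.5 * lam ^ 2 * ε) / (1 - lam * ε) ^ 2 with hc
  have hcnn : 0 ≤ c := aux_c_nonneg hlam hε hx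
  have hkey : ∀ᵐ ω ∂μ, ∀ i, i ∈ Finset.Icc 1 n →
      (μ[(fun ω' => ξ i ω' * Real.exp (lam * ξ i ω')) | ℱ (i - 1)]) ω
        ≤ c * (μ[(fun ω' => ξ i ω' ^ 2) | ℱ (i - 1)]) ω := by
    rw [ae_all_iff]
    intro i
    by_cases hi : i ∈ Finset.Icc 1 n
    · filter_upwards [key μ (ℱ (i - 1)) (hle (i - 1)) (ξ i) (hint i) (hintmexp i) (hmd i hi)
        hε hlam hx (fun k hk => hbern k hk i hi)] with ω h
      exact fun _ => h
    · exact Filter.Eventually.of_forall fun ω h => absurd h hi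
  have hden : ∀ᵐ ω ∂μ, ∀ i, i ∈ Finset.Icc 1 n →
      1 ≤ (μ[(fun ω' => Real.exp (lam * ξ i ω')) | ℱ (i - 1)]) ω := by
    rw [ae_all_iff]
    intro i
    by_cases hi : i ∈ Finset.Icc 1 n
    · have hXint : Integrable (ξ i) μ := by simpa using hint i 1
      have hlin : Integrable (fun ω => 1 + lam * ξ i ω) μ :=
        (integrable_const 1).add (hXint.const_mul lam)
      have h1 : (fun ω => 1 + lam * ξ i ω) ≤ᵐ[μ] fun ω => Real.exp (lam * ξ i ω) := by
        refine Filter.Eventually.of_forall fun ω => ?_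
        show 1 + lam * ξ i ω ≤ Real.exp (lam * ξ i ω)
        linarith [Real.add_one_le_exp (lam * ξ i ω)]
      have h2 := condExp_mono (m := ℱ (i - 1)) hlin (hintexp i lam) h1
      have heq : (fun ω => 1 + lam * ξ i ω) = (fun _ : Ω => (1:ℝ)) + lam • (ξ i) := by
        funext ω
        simp [Pi.add_apply]
      rw [heq] at h2
      have h3 := condExp_add (m := ℱ (i - 1)) (μ := μ) (integrable_const (1:ℝ)) (hXint.smul lam)
      have h4 := condExp_smul (m := ℱ (i - 1)) (μ := μ) lam (ξ i)
      have h5 := condExp_const (hle (i - 1)) (1:ℝ) (μ := μ)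
      filter_upwards [h2, h3, h4, hmd i hi] with ω hω2 hω3 hω4 hω0
      intro _
      simp only [hω3, Pi.add_apply, h5, hω4, Pi.smul_apply, hω0, Pi.zero_apply, smul_eq_mul,
        mul_zero, add_zero] at hω2
      exact hω2
    · exact Filter.Eventually.of_forall fun ω h => absurd h hi
  have hsig : ∀ᵐ ω ∂μ, ∀ i, i ∈ Finset.Icc 1 n →
      0 ≤ (μ[(fun ω' => ξ i ω' ^ 2) | ℱ (i - 1)]) ω := by
    rw [ae_all_iff]
    intro i
    filter_upwards [condExp_nonneg (m := ℱ (i - 1)) (μ := μ)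
      (Filter.Eventually.of_forall fun ω => sq_nonneg (ξ i ω))] with ω h
    exact fun _ => h
  filter_upwards [hkey, hden, hsig, hA2] with ω hk hd hs hA
  have hsum2 : ∑ i ∈ Finset.Icc 1 n, (μ[(fun ω' => ξ i ω' ^ 2) | ℱ (i - 1)]) ω ≤ 1 + δ ^ 2 := by
    have := (abs_le.1 hA).2
    linarith
  calc ∑ i ∈ Finset.Icc 1 n,
        (μ[(fun ω' => ξ i ω' * Real.exp (lam * ξ i ω')) | ℱ (i - 1)]) ω /
          (μ[(fun ω' => Real.exp (lam * ξ i ω')) | ℱ (i - 1)]) ω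
      ≤ ∑ i ∈ Finset.Icc 1 n, c * (μ[(fun ω' => ξ i ω' ^ 2) | ℱ (i - 1)]) ω := by
        refine Finset.sum_le_sum fun i hi => ?_
        have hden1 := hd i hi
        have hnum := hk i hi
        have hσ := hs i hi
        rcases le_or_gt ((μ[(fun ω' => ξ i ω' * Real.exp (lam * ξ i ω')) | ℱ (i - 1)]) ω) 0
          with h | h
        · have hdpos : (0:ℝ) ≤ (μ[(fun ω' => Real.exp (lam * ξ i ω')) | ℱ (i - 1)]) ω := by
            linarith
          exact (div_nonpos_iff.mpr (Or.inr ⟨h, hdpos⟩)).trans (mul_nonneg hcnn hσ)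
        · exact (div_le_self h.le hden1).trans hnum
    _ = c * ∑ i ∈ Finset.Icc 1 n, (μ[(fun ω' => ξ i ω' ^ 2) | ℱ (i - 1)]) ω := by
        rw [Finset.mul_sum]
    _ ≤ c * (1 + δ ^ 2) := mul_le_mul_of_nonneg_left hsum2 hcnn
end

section
/- Under the conditional Bernstein condition with parameter ε ∈ (0,1/2] and the condition |⟨S⟩_n − 1| ≤ δ² a.s., for all 0 ≤ λ < ε^{-1} the cumulant process Ψ_n(λ) = ∑_{i=1}^n log E[e^{λξ_i} | F_{i-1}] satisfies Ψ_n(λ) ≤ λ²(1 + δ²)/(2(1 − λε)) almost surely. -/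
open MeasureTheory ProbabilityTheory Real

open MeasureTheory ProbabilityTheory Real Filter Function
open scoped ENNReal

lemma my_condexp_pos {Ω : Type*} {m : MeasurableSpace Ω} [m0 : MeasurableSpace Ω] (hm : m ≤ m0)
    (μ : Measure Ω) [IsFiniteMeasure μ] {f : Ω → ℝ} (hf : Integrable f μ)
    (hpos : ∀ᵐ ω ∂μ, 0 < f ω) : ∀ᵐ ω ∂μ, 0 < (μ[f|m]) ω := by
  haveI : SigmaFinite (μ.trim hm) := inferInstance
  set g := μ[f|m] with hg
  have hgm : StronglyMeasurable[m] g := stronglyMeasurable_condExp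
  have hAm : MeasurableSet[m] {ω | g ω ≤ 0} :=
    measurableSet_le hgm.measurable measurable_const
  set A : Set Ω := {ω | g ω ≤ 0} with hA
  have hA0 : MeasurableSet[m0] A := hm _ hAm
  by_contra h
  rw [ae_iff] at h
  have hμA : μ A ≠ 0 := by
    simpa [A, hA, not_lt] using h
  have hnull : μ (support f)ᶜ = 0 := by
    have hc : (support f)ᶜ = {a | f a = 0} := by
      ext a; simp [Function.mem_support]
    have : ∀ᵐ ω ∂μ, ω ∈ support f := hpos.mono fun ω h => ne_of_gt h
    rw [hc]
    simpa [ae_iff, Function.mem_support] using this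
  have hAeq : μ (support f ∩ A) = μ A := by
    refine le_antisymm (measure_mono Set.inter_subset_right) ?_
    calc μ A ≤ μ ((support f ∩ A) ∪ (support f)ᶜ) := by
          refine measure_mono fun ω hω => ?_
          by_cases hs : ω ∈ support f
          · exact Or.inl ⟨hs, hω⟩
          · exact Or.inr hs
      _ ≤ μ (support f ∩ A) + μ (support f)ᶜ := measure_union_le _ _
      _ = μ (support f ∩ A) := by rw [hnull, add_zero]
  have h1 : 0 < ∫ ω in A, f ω ∂μ := by
    rw [setIntegral_pos_iff_support_of_nonneg_ae
      (ae_restrict_of_ae (hpos.mono fun _ h => h.le)) hf.integrableOn]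
    rw [hAeq]
    exact pos_iff_ne_zero.2 hμA
  have h2 : ∫ ω in A, f ω ∂μ ≤ 0 := by
    rw [← setIntegral_condExp hm hf hAm]
    exact setIntegral_nonpos hA0 fun ω hω => hω
  linarith

lemma my_condexp_subseq {Ω : Type*} {m : MeasurableSpace Ω} [m0 : MeasurableSpace Ω] (hm : m ≤ m0)
    (μ : Measure Ω) [IsFiniteMeasure μ] {fs : ℕ → Ω → ℝ} {f : Ω → ℝ} (bound : Ω → ℝ)
    (hfs_meas : ∀ n, AEStronglyMeasurable (fs n) μ) (h_int : Integrable bound μ)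
    (hb : ∀ n, ∀ᵐ x ∂μ, ‖fs n x‖ ≤ bound x)
    (hfs : ∀ᵐ x ∂μ, Tendsto (fun n => fs n x) atTop (nhds (f x))) :
    ∃ φ : ℕ → ℕ, StrictMono φ ∧
      ∀ᵐ x ∂μ, Tendsto (fun n => (μ[fs (φ n)|m]) x) atTop (nhds ((μ[f|m]) x)) := by
  haveI : SigmaFinite (μ.trim hm) := inferInstance
  have h := tendsto_condExpL1_of_dominated_convergence (μ := μ) hm bound hfs_meas h_int hb hfs
  haveI : Fact ((1:ℝ≥0∞) ≤ 1) := ⟨le_rfl⟩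
  obtain ⟨φ, hφ, hae⟩ := (tendstoInMeasure_of_tendsto_Lp h).exists_seq_tendsto_ae
  refine ⟨φ, hφ, ?_⟩
  have h1 : ∀ᵐ x ∂μ, ∀ n, (μ[fs (φ n)|m]) x = (condExpL1 hm μ (fs (φ n)) : Ω → ℝ) x :=
    ae_all_iff.2 fun n => condExp_ae_eq_condExpL1 hm (fs (φ n))
  have h2 := condExp_ae_eq_condExpL1 (μ := μ) hm f
  filter_upwards [hae, h1, h2] with x hx h1x h2x
  rw [show (fun n => (μ[fs (φ n)|m]) x) = fun n => (condExpL1 hm μ (fs (φ n)) : Ω → ℝ) x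
    from funext h1x, h2x]
  exact hx

lemma my_key {Ω : Type*} {m : MeasurableSpace Ω} [m0 : MeasurableSpace Ω] (hm : m ≤ m0)
    (μ : Measure Ω) [IsProbabilityMeasure μ] (ξ : Ω → ℝ)
    (hint : ∀ k : ℕ, Integrable (fun ω => ξ ω ^ k) μ)
    (hintexp : ∀ c : ℝ, Integrable (fun ω => Real.exp (c * ξ ω)) μ)
    (hmd : μ[ξ|m] =ᵐ[μ] 0)
    (ε : ℝ) (hε : 0 < ε)
    (hbern : ∀ k, 2 ≤ k → ∀ᵐ ω ∂μ, |(μ[(fun ω' => ξ ω' ^ k)|m]) ω|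
        ≤ (1 / 2) * (Nat.factorial k) * ε ^ (k - 2) * (μ[(fun ω' => ξ ω' ^ 2)|m]) ω)
    (lam : ℝ) (hlam : 0 ≤ lam) (hlamε : lam * ε < 1) :
    ∀ᵐ ω ∂μ,
      Real.log ((μ[(fun ω' => Real.exp (lam * ξ ω'))|m]) ω)
        ≤ lam ^ 2 / (2 * (1 - lam * ε)) * (μ[(fun ω' => ξ ω' ^ 2)|m]) ω := by
  haveI : SigmaFinite (μ.trim hm) := inferInstance
  set C : ℝ := lam ^ 2 / (2 * (1 - lam * ε)) with hC
  have hden : 0 < 1 - lam * ε := by linarith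
  have hCpos : 0 ≤ C := by positivity
  set g : ℕ → Ω → ℝ := fun k => μ[(fun ω' => ξ ω' ^ k)|m] with hgdef
  set fs : ℕ → Ω → ℝ := fun N ω => ∑ k ∈ Finset.range N, lam ^ k / (k.factorial : ℝ) * ξ ω ^ k
    with hfsdef
  have hfs_int : ∀ N, Integrable (fs N) μ := fun N =>
    integrable_finset_sum _ fun k _ => (hint k).const_mul _
  set bound : Ω → ℝ := fun ω => Real.exp (lam * ξ ω) + Real.exp (-lam * ξ ω) with hbd
  have hbound_int : Integrable bound μ := (hintexp lam).add (hintexp (-lam))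
  have hb : ∀ N, ∀ᵐ ω ∂μ, ‖fs N ω‖ ≤ bound ω := by
    intro N
    refine Eventually.of_forall fun ω => ?_
    have h1 : ‖fs N ω‖ ≤ ∑ k ∈ Finset.range N, (lam * |ξ ω|) ^ k / (k.factorial : ℝ) := by
      refine (norm_sum_le _ _).trans (Finset.sum_le_sum fun k _ => ?_)
      rw [Real.norm_eq_abs, abs_mul, abs_pow, abs_div, abs_pow, mul_pow,
        abs_of_nonneg hlam, Nat.abs_cast, div_mul_eq_mul_div]
    have h2 : ∑ k ∈ Finset.range N, (lam * |ξ ω|) ^ k / (k.factorial : ℝ)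
        ≤ Real.exp (lam * |ξ ω|) :=
      Real.sum_le_exp_of_nonneg (mul_nonneg hlam (abs_nonneg _)) N
    have h3 : Real.exp (lam * |ξ ω|) ≤ bound ω := by
      rcases abs_cases (ξ ω) with ⟨he, _⟩ | ⟨he, _⟩ <;> rw [he]
      · have := Real.exp_pos (-lam * ξ ω)
        simp only [hbd]; linarith
      · have := Real.exp_pos (lam * ξ ω)
        have he2 : lam * -ξ ω = -lam * ξ ω := by ring
        simp only [hbd, he2]; linarith
    linarith
  have htend : ∀ᵐ ω ∂μ, Tendsto (fun N => fs N ω) atTop (nhds (Real.exp (lam * ξ ω))) := by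
    refine Eventually.of_forall fun ω => ?_
    have h := (NormedSpace.expSeries_div_hasSum_exp (lam * ξ ω)).tendsto_sum_nat
    rw [← Real.exp_eq_exp_ℝ] at h
    have heq : (fun N => fs N ω)
        = fun N => ∑ i ∈ Finset.range N, (lam * ξ ω) ^ i / (i.factorial : ℝ) := by
      funext N
      refine Finset.sum_congr rfl fun k _ => ?_
      rw [mul_pow]; ring
    rw [heq]
    exact h
  have hcond : ∀ N, μ[fs N|m] =ᵐ[μ]
      fun ω => ∑ k ∈ Finset.range N, lam ^ k / (k.factorial : ℝ) * g k ω := by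
    intro N
    have h1 : fs N = ∑ k ∈ Finset.range N,
        (lam ^ k / (k.factorial : ℝ)) • (fun ω => ξ ω ^ k) := by
      funext ω; simp [hfsdef, Finset.sum_apply, smul_eq_mul]
    rw [h1]
    refine (condExp_finsetSum (fun k _ => (hint k).smul _) m).trans ?_
    have h2 : ∀ᵐ ω ∂μ, ∀ k ∈ Finset.range N,
        (μ[(lam ^ k / (k.factorial : ℝ)) • (fun ω' => ξ ω' ^ k)|m]) ω
          = lam ^ k / (k.factorial : ℝ) * g k ω :=
      (ae_ball_iff (Finset.range N).countable_toSet).2 fun k _ =>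
        (condExp_smul _ _ m).mono fun ω h => by rw [h]; rfl
    filter_upwards [h2] with ω h2ω
    rw [Finset.sum_apply]
    exact Finset.sum_congr rfl fun k hk => h2ω k hk
  obtain ⟨φ, hφmono, hφ⟩ := my_condexp_subseq hm μ bound
    (fun N => (hfs_int N).aestronglyMeasurable) hbound_int hb htend
  have hcondall : ∀ᵐ ω ∂μ, ∀ N, (μ[fs N|m]) ω
      = ∑ k ∈ Finset.range N, lam ^ k / (k.factorial : ℝ) * g k ω :=
    ae_all_iff.2 fun N => hcond N
  have hg0 : g 0 =ᵐ[μ] fun _ => (1 : ℝ) := by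
    have : (fun ω' => ξ ω' ^ 0) = fun _ : Ω => (1 : ℝ) := by funext ω'; rw [pow_zero]
    rw [hgdef]; simp only [this]
    exact Filter.EventuallyEq.of_eq (condExp_const (μ := μ) hm (1 : ℝ))
  have hg1 : g 1 =ᵐ[μ] 0 := by
    have : (fun ω' => ξ ω' ^ 1) = ξ := by funext ω'; rw [pow_one]
    rw [hgdef]; simp only [this]
    exact hmd
  have hbernall : ∀ᵐ ω ∂μ, ∀ j : ℕ, |g (j + 2) ω|
      ≤ (1 / 2) * ((j + 2).factorial : ℝ) * ε ^ j * g 2 ω := by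
    refine ae_all_iff.2 fun j => (hbern (j + 2) (by omega)).mono fun ω h => ?_
    simpa using h
  have hg2 : ∀ᵐ ω ∂μ, 0 ≤ g 2 ω :=
    condExp_nonneg (Eventually.of_forall fun ω => by positivity)
  have hpos : ∀ᵐ ω ∂μ, 0 < (μ[(fun ω' => Real.exp (lam * ξ ω'))|m]) ω :=
    my_condexp_pos hm μ (hintexp lam) (Eventually.of_forall fun ω => Real.exp_pos _)
  filter_upwards [hφ, hcondall, hg0, hg1, hbernall, hg2, hpos] with ω hφω hcondω hg0ω hg1ω
    hbernω hg2ω hposω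
  have hps : ∀ N, ∑ k ∈ Finset.range N, lam ^ k / (k.factorial : ℝ) * g k ω
      ≤ 1 + C * g 2 ω := by
    intro N
    match N with
    | 0 => simp; nlinarith
    | 1 =>
      rw [Finset.sum_range_one, hg0ω]
      simp; nlinarith
    | (M + 2) =>
      rw [show M + 2 = 2 + M by omega, Finset.sum_range_add]
      have hhead : ∑ k ∈ Finset.range 2, lam ^ k / (k.factorial : ℝ) * g k ω = 1 := by
        rw [Finset.sum_range_succ, Finset.sum_range_one, hg0ω, hg1ω]
        norm_num
      rw [hhead]
      have htail : ∑ j ∈ Finset.range M, lam ^ (2 + j) / ((2 + j).factorial : ℝ) * g (2 + j) ω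
          ≤ ∑ j ∈ Finset.range M, (1 / 2) * lam ^ 2 * g 2 ω * (lam * ε) ^ j := by
        refine Finset.sum_le_sum fun j _ => ?_
        have hf0 : (0 : ℝ) < ((2 + j).factorial : ℝ) := by
          exact_mod_cast Nat.factorial_pos _
        have h1 : lam ^ (2 + j) / ((2 + j).factorial : ℝ) * g (2 + j) ω
            ≤ lam ^ (2 + j) / ((2 + j).factorial : ℝ)
              * ((1 / 2) * ((2 + j).factorial : ℝ) * ε ^ j * g 2 ω) := by
          refine mul_le_mul_of_nonneg_left ?_ (by positivity)
          refine (le_abs_self _).trans ?_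
          have := hbernω j
          rw [show j + 2 = 2 + j by omega] at this
          exact this
        refine h1.trans_eq ?_
        rw [pow_add, mul_pow]
        field_simp
      have hgeom : ∑ j ∈ Finset.range M, (lam * ε) ^ j ≤ (1 - lam * ε)⁻¹ := by
        refine ((summable_geometric_of_lt_one (by positivity) hlamε).sum_le_tsum _
          (fun j _ => by positivity)).trans_eq
          (tsum_geometric_of_lt_one (by positivity) hlamε)
      have htail2 : ∑ j ∈ Finset.range M, (1 / 2) * lam ^ 2 * g 2 ω * (lam * ε) ^ j
          ≤ C * g 2 ω := by
        rw [← Finset.mul_sum]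
        have h2 : (1 / 2) * lam ^ 2 * g 2 ω * ∑ j ∈ Finset.range M, (lam * ε) ^ j
            ≤ (1 / 2) * lam ^ 2 * g 2 ω * (1 - lam * ε)⁻¹ :=
          mul_le_mul_of_nonneg_left hgeom (by positivity)
        refine h2.trans_eq ?_
        rw [hC]
        field_simp
      linarith
  have hle : (μ[(fun ω' => Real.exp (lam * ξ ω'))|m]) ω ≤ 1 + C * g 2 ω := by
    refine le_of_tendsto hφω (Eventually.of_forall fun N => ?_)
    rw [hcondω (φ N)]
    exact hps (φ N)
  have := Real.log_le_sub_one_of_pos hposω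
  have : Real.log ((μ[(fun ω' => Real.exp (lam * ξ ω'))|m]) ω) ≤ C * g 2 ω := by linarith
  exact this

theorem stmt_4 {Ω : Type*} [MeasurableSpace Ω] (μ : Measure Ω) [IsProbabilityMeasure μ]
    (n : ℕ) (ℱ : ℕ → MeasurableSpace Ω) (hmono : Monotone ℱ) (hle : ∀ i, ℱ i ≤ ‹MeasurableSpace Ω›)
    (ξ : ℕ → Ω → ℝ)
    (hadapt : ∀ i, StronglyMeasurable[ℱ i] (ξ i))
    (hint : ∀ i k, Integrable (fun ω => ξ i ω ^ (k : ℕ)) μ)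
    (hintexp : ∀ i (c : ℝ), Integrable (fun ω => Real.exp (c * ξ i ω)) μ)
    (hmd : ∀ i ∈ Finset.Icc 1 n, μ[ξ i | ℱ (i - 1)] =ᵐ[μ] 0)
    (ε : ℝ) (hε : 0 < ε) (hε2 : ε ≤ 1 / 2)
    (hbern : ∀ k, 2 ≤ k → ∀ i ∈ Finset.Icc 1 n,
      ∀ᵐ ω ∂μ, |(μ[(fun ω' => ξ i ω' ^ k) | ℱ (i - 1)]) ω|
        ≤ (1 / 2) * (Nat.factorial k) * ε ^ (k - 2) * (μ[(fun ω' => ξ i ω' ^ 2) | ℱ (i - 1)]) ω)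
    (δ : ℝ) (hδ0 : 0 ≤ δ) (hδ1 : δ ≤ 1)
    (hA2 : ∀ᵐ ω ∂μ,
      |(∑ i ∈ Finset.Icc 1 n, (μ[(fun ω' => ξ i ω' ^ 2) | ℱ (i - 1)]) ω) - 1| ≤ δ ^ 2)
    (lam : ℝ) (hlam : 0 ≤ lam) (hlamε : lam < ε⁻¹) :
    ∀ᵐ ω ∂μ,
      ∑ i ∈ Finset.Icc 1 n,
        Real.log ((μ[(fun ω' => Real.exp (lam * ξ i ω')) | ℱ (i - 1)]) ω)
      ≤ lam ^ 2 * (1 + δ ^ 2) / (2 * (1 - lam * ε)) := by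
  have hεlam : lam * ε < 1 := by
    have h := mul_lt_mul_of_pos_right hlamε hε
    rwa [inv_mul_cancel₀ hε.ne'] at h
  have hden : 0 < 1 - lam * ε := by linarith
  have hCpos : 0 ≤ lam ^ 2 / (2 * (1 - lam * ε)) := by positivity
  have key : ∀ i ∈ Finset.Icc 1 n, ∀ᵐ ω ∂μ,
      Real.log ((μ[(fun ω' => Real.exp (lam * ξ i ω')) | ℱ (i - 1)]) ω)
        ≤ lam ^ 2 / (2 * (1 - lam * ε)) * (μ[(fun ω' => ξ i ω' ^ 2) | ℱ (i - 1)]) ω ∧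
      0 ≤ (μ[(fun ω' => ξ i ω' ^ 2) | ℱ (i - 1)]) ω := by
    intro i hi
    have h1 := my_key (hle (i - 1)) μ (ξ i) (hint i) (hintexp i) (hmd i hi) ε hε
      (fun k hk => hbern k hk i hi) lam hlam hεlam
    have h2 : ∀ᵐ ω ∂μ, 0 ≤ (μ[(fun ω' => ξ i ω' ^ 2) | ℱ (i - 1)]) ω :=
      condExp_nonneg (Eventually.of_forall fun ω => by positivity)
    exact h1.and h2
  have hall : ∀ᵐ ω ∂μ, ∀ i ∈ Finset.Icc 1 n,
      Real.log ((μ[(fun ω' => Real.exp (lam * ξ i ω')) | ℱ (i - 1)]) ω)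
        ≤ lam ^ 2 / (2 * (1 - lam * ε)) * (μ[(fun ω' => ξ i ω' ^ 2) | ℱ (i - 1)]) ω ∧
      0 ≤ (μ[(fun ω' => ξ i ω' ^ 2) | ℱ (i - 1)]) ω :=
    (ae_ball_iff (Finset.Icc 1 n).countable_toSet).2 key
  filter_upwards [hA2, hall] with ω h2ω hallω
  have hsum : ∑ i ∈ Finset.Icc 1 n, (μ[(fun ω' => ξ i ω' ^ 2) | ℱ (i - 1)]) ω ≤ 1 + δ ^ 2 := by
    have := abs_le.1 h2ω
    linarith [this.2]
  calc ∑ i ∈ Finset.Icc 1 n,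
        Real.log ((μ[(fun ω' => Real.exp (lam * ξ i ω')) | ℱ (i - 1)]) ω)
      ≤ ∑ i ∈ Finset.Icc 1 n,
        lam ^ 2 / (2 * (1 - lam * ε)) * (μ[(fun ω' => ξ i ω' ^ 2) | ℱ (i - 1)]) ω :=
        Finset.sum_le_sum fun i hi => (hallω i hi).1
    _ = lam ^ 2 / (2 * (1 - lam * ε))
        * ∑ i ∈ Finset.Icc 1 n, (μ[(fun ω' => ξ i ω' ^ 2) | ℱ (i - 1)]) ω := by
        rw [Finset.mul_sum]
    _ ≤ lam ^ 2 / (2 * (1 - lam * ε)) * (1 + δ ^ 2) :=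
        mul_le_mul_of_nonneg_left hsum hCpos
    _ = lam ^ 2 * (1 + δ ^ 2) / (2 * (1 - lam * ε)) := div_mul_eq_mul_div _ _ _
end

section
/- Let ε ∈ (0, 1/2], δ ∈ [0,1], and x ≥ 0. Define λ̄ = (2x/(1+δ²)) / (1 + 2xε/(1+δ²) + √(1 + 2xε/(1+δ²))). Then λ̄ ∈ [0, ε^{-1}) and λ̄ is the unique solution in [0, ε^{-1}) of the equation (λ − 0.5λ²ε)/(1 − λε)² = x/(1 + δ²). -/
theorem stmt_7 (ε δ x : ℝ) (hε : 0 < ε) (hε2 : ε ≤ 1 / 2) (hδ0 : 0 ≤ δ) (hδ1 : δ ≤ 1)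
    (hx : 0 ≤ x) :
    let lamBar := (2 * x / (1 + δ ^ 2)) /
      (1 + 2 * x * ε / (1 + δ ^ 2) + Real.sqrt (1 + 2 * x * ε / (1 + δ ^ 2)))
    (0 ≤ lamBar ∧ lamBar < ε⁻¹) ∧
    (lamBar - 0.5 * lamBar ^ 2 * ε) / (1 - lamBar * ε) ^ 2 = x / (1 + δ ^ 2) ∧
    ∀ lam : ℝ, 0 ≤ lam → lam < ε⁻¹ →
      (lam - 0.5 * lam ^ 2 * ε) / (1 - lam * ε) ^ 2 = x / (1 + δ ^ 2) → lam = lamBar := by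
  intro lamBar
  have hD : (0:ℝ) < 1 + δ ^ 2 := by positivity
  set D : ℝ := 1 + δ ^ 2 with hDdef
  set t : ℝ := 2 * x * ε / D with htdef
  have ht0 : 0 ≤ t := by positivity
  set s : ℝ := Real.sqrt (1 + t) with hsdef
  have hs2 : s ^ 2 = 1 + t := Real.sq_sqrt (by linarith)
  have hs0 : 0 ≤ s := Real.sqrt_nonneg _
  have hs1 : 1 ≤ s := by nlinarith
  have hsp : 0 < s := by linarith
  have htD : t * D = 2 * x * ε := by
    rw [htdef, div_mul_cancel₀ _ hD.ne']
  have h2x : 2 * x / D = t / ε := by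
    rw [htdef]; field_simp
  have hlam : lamBar = (s - 1) / (ε * s) := by
    show (2 * x / D) / (1 + t + s) = (s - 1) / (ε * s)
    have hden : 0 < 1 + t + s := by linarith
    rw [h2x, div_div, div_eq_div_iff (by positivity) (by positivity)]
    linear_combination (-ε) * hs2
  have hmul : 1 - lamBar * ε = s⁻¹ := by
    rw [hlam]
    field_simp
    ring
  have hlb0 : 0 ≤ lamBar := by
    rw [hlam]; exact div_nonneg (by linarith) (by positivity)
  have hlblt : lamBar < ε⁻¹ := by
    rw [hlam, div_lt_iff₀ (by positivity)]
    have h : ε⁻¹ * (ε * s) = s := by field_simp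
    rw [h]; linarith
  clear_value lamBar s t D
  refine ⟨⟨hlb0, hlblt⟩, ?_, ?_⟩
  · rw [hmul, hlam]
    have h5 : (0.5:ℝ) = 1/2 := by norm_num
    rw [h5]
    field_simp
    linear_combination D * hs2 + htD
  · intro lam hl0 hl1 heq
    have hle : lam * ε < 1 := by
      calc lam * ε < ε⁻¹ * ε := mul_lt_mul_of_pos_right hl1 hε
        _ = 1 := by field_simp
    have h1 : 0 < 1 - lam * ε := by linarith
    have h2 : (lam - 0.5 * lam ^ 2 * ε) * D = x * (1 - lam * ε) ^ 2 := by
      rw [div_eq_div_iff (pow_pos h1 2).ne' hD.ne'] at heq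
      exact heq
    have key' : D * ((ε * lam * s - (s - 1)) * (ε * lam * s - (s + 1))) = 0 := by
      linear_combination (ε*lam - 1)^2 * D * hs2 - 2*ε * h2 + (1-lam*ε)^2 * htD
    have key : (ε * lam * s - (s - 1)) * (ε * lam * s - (s + 1)) = 0 :=
      (mul_eq_zero.mp key').resolve_left hD.ne'
    have h3 : ε * lam * s - (s + 1) < 0 := by
      have h' : ε * lam * s < 1 * s := by
        apply mul_lt_mul_of_pos_right _ hsp
        linarith
      linarith
    have h4 : ε * lam * s - (s - 1) = 0 := by
      rcases mul_eq_zero.mp key with h | h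
      · exact h
      · linarith
    have hfin : lam = (s - 1) / (ε * s) := by
      rw [eq_div_iff (by positivity)]
      linear_combination h4
    rw [hlam]; exact hfin
end

section
/- Let (ξ_i)_{i=1,…,n} be independent symmetric random variables, let [S]_n = ∑_{i=1}^n ξ_i², let F_0 = σ(ξ_j², 1 ≤ j ≤ n), F_i = σ(ξ_k, 1 ≤ k ≤ i; ξ_j², 1 ≤ j ≤ n), and set η_i = ξ_i/√([S]_n) (with 0/0 = 0). Then (η_i, F_i) is a sequence of martingale differences, each η_i is conditionally symmetric given F_{i-1}, and ∑_{i=1}^n E[η_i² | F_{i-1}] = ∑_{i=1}^n η_i² = 1 a.s. (on the event [S]_n > 0). -/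
set_option maxHeartbeats 800000

open MeasureTheory ProbabilityTheory Real
open Fin.NatCast

lemma joint_law {Ω : Type*} [MeasurableSpace Ω] (μ : Measure Ω) [IsProbabilityMeasure μ]
    (N : ℕ) (ξ : ℕ → Ω → ℝ) (hmeas : ∀ i, Measurable (ξ i))
    (hindep : iIndepFun ξ μ) :
    Measure.map (fun ω (k : Fin N) => ξ k ω) μ
      = Measure.pi (fun k : Fin N => Measure.map (ξ (k : ℕ)) μ) := by
  classical
  haveI : ∀ k : Fin N, IsProbabilityMeasure (Measure.map (ξ (k : ℕ)) μ) :=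
    fun k => Measure.isProbabilityMeasure_map (hmeas _).aemeasurable
  refine (Measure.pi_eq fun s hs => ?_).symm
  set s' : ℕ → Set ℝ := fun j => if h : j < N then s ⟨j, h⟩ else Set.univ with hs'
  have hs'm : ∀ j, MeasurableSet (s' j) := by
    intro j; rw [hs']; dsimp only; split_ifs with h
    exacts [hs _, MeasurableSet.univ]
  rw [Measure.map_apply (measurable_pi_lambda _ fun k => hmeas _)
    (MeasurableSet.pi Set.countable_univ (fun k _ => hs k))]
  have hpre : (fun ω (k : Fin N) => ξ k ω) ⁻¹' (Set.pi Set.univ s)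
      = ⋂ j ∈ Finset.range N, ξ j ⁻¹' (s' j) := by
    ext ω
    simp only [Set.mem_preimage, Set.mem_pi, Set.mem_univ, forall_true_left, Set.mem_iInter,
      Finset.mem_range, hs']
    constructor
    · intro h j hj
      simpa only [dif_pos hj] using h ⟨j, hj⟩
    · intro h k
      simpa only [dif_pos k.isLt] using h k k.isLt
  rw [hpre, hindep.measure_inter_preimage_eq_mul (Finset.range N) (fun j _ => hs'm j),
    ← Fin.prod_univ_eq_prod_range (fun j => μ (ξ j ⁻¹' s' j)) N]
  refine Finset.prod_congr rfl fun k _ => ?_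
  have : s' (k : ℕ) = s k := by rw [hs']; simp [k.isLt]
  rw [this, Measure.map_apply (hmeas _) (hs k)]

/-- The sub-σ-algebra of the product space generated by coordinates `1,…,i-1` and squares of
coordinates `1,…,n`. -/
def mSig (n i : ℕ) : MeasurableSpace (Fin (n+1) → ℝ) :=
  (⨆ k ∈ Finset.Icc 1 (i-1),
    MeasurableSpace.comap (fun x : Fin (n+1) → ℝ => x (k : Fin (n+1))) inferInstance) ⊔
  (⨆ j ∈ Finset.Icc 1 n,
    MeasurableSpace.comap (fun x : Fin (n+1) → ℝ => (x (j : Fin (n+1))) ^ 2) inferInstance)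

/-- The σ-algebra of `T`-invariant sets. -/
def invSig {α : Type*} (T : α → α) : MeasurableSpace α where
  MeasurableSet' := fun B => T ⁻¹' B = B
  measurableSet_empty := rfl
  measurableSet_compl := fun s hs => by
    show T ⁻¹' sᶜ = sᶜ; rw [Set.preimage_compl, hs]
  measurableSet_iUnion := fun g hg => by
    show T ⁻¹' (⋃ l, g l) = ⋃ l, g l
    rw [Set.preimage_iUnion]; simp only [hg]

lemma measurableSet_invSig {α : Type*} (T : α → α) (B : Set α) :
    MeasurableSet[invSig T] B ↔ T ⁻¹' B = B := Iff.rfl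

theorem stmt_12 {Ω : Type*} [MeasurableSpace Ω] (μ : Measure Ω) [IsProbabilityMeasure μ]
    (n : ℕ) (ξ : ℕ → Ω → ℝ)
    (hmeas : ∀ i, Measurable (ξ i))
    (hindep : iIndepFun ξ μ)
    (hsymm : ∀ i ∈ Finset.Icc 1 n, Measure.map (ξ i) μ = Measure.map (fun ω => -ξ i ω) μ)
    (hnd : ∀ i ∈ Finset.Icc 1 n, μ {ω | ξ i ω = 0} < 1)
    (η : ℕ → Ω → ℝ)
    (hη : ∀ i ω, η i ω = ξ i ω / Real.sqrt (∑ j ∈ Finset.Icc 1 n, (ξ j ω) ^ 2))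
    (ℱ : ℕ → MeasurableSpace Ω)
    (hℱ : ∀ i, ℱ i =
      (⨆ k ∈ Finset.Icc 1 i, MeasurableSpace.comap (ξ k) (inferInstance : MeasurableSpace ℝ)) ⊔
      (⨆ j ∈ Finset.Icc 1 n,
        MeasurableSpace.comap (fun ω => (ξ j ω) ^ 2) (inferInstance : MeasurableSpace ℝ))) :
    (∀ i ∈ Finset.Icc 1 n, μ[η i | ℱ (i - 1)] =ᵐ[μ] 0) ∧
    (∀ i ∈ Finset.Icc 1 n, ∀ y : ℝ,
      μ[Set.indicator {ω' | η i ω' > y} (fun _ => (1 : ℝ)) | ℱ (i - 1)]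
        =ᵐ[μ] μ[Set.indicator {ω' | -η i ω' > y} (fun _ => (1 : ℝ)) | ℱ (i - 1)]) ∧
    (∀ᵐ ω ∂μ, 0 < ∑ j ∈ Finset.Icc 1 n, (ξ j ω) ^ 2 →
      (∑ i ∈ Finset.Icc 1 n, (μ[(fun ω' => (η i ω') ^ 2) | ℱ (i - 1)]) ω
          = ∑ i ∈ Finset.Icc 1 n, (η i ω) ^ 2 ∧
        ∑ i ∈ Finset.Icc 1 n, (η i ω) ^ 2 = 1)) := by
  classical
  set S : Ω → ℝ := fun ω => ∑ j ∈ Finset.Icc 1 n, (ξ j ω) ^ 2 with hS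
  have hSnn : ∀ ω, 0 ≤ S ω := fun ω => Finset.sum_nonneg fun j _ => sq_nonneg _
  have hSmeas : Measurable S := Finset.measurable_sum _ fun j _ => (hmeas j).pow_const 2
  have hηm : ∀ i, Measurable (η i) := by
    intro i
    have h : η i = fun ω => ξ i ω / Real.sqrt (S ω) := funext fun ω => hη i ω
    rw [h]
    exact (hmeas i).div hSmeas.sqrt
  have hm0 : ∀ i : ℕ, ℱ i ≤ ‹MeasurableSpace Ω› := by
    intro i
    rw [hℱ]
    refine sup_le (iSup_le fun k => iSup_le fun _ => Measurable.comap_le (hmeas k))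
      (iSup_le fun j => iSup_le fun _ => Measurable.comap_le ((hmeas j).pow_const 2))
  haveI hSF : ∀ i : ℕ, SigmaFinite (μ.trim (hm0 i)) := fun i => inferInstance
  have hηb : ∀ i ∈ Finset.Icc 1 n, ∀ ω, |η i ω| ≤ 1 := by
    intro i hi ω
    rw [hη]
    rcases eq_or_lt_of_le (Real.sqrt_nonneg (S ω)) with h0 | h0
    · rw [← h0, div_zero, abs_zero]; exact zero_le_one
    · rw [abs_div, abs_of_pos h0, div_le_one h0]
      have h1 : (ξ i ω) ^ 2 ≤ S ω :=
        Finset.single_le_sum (fun j _ => sq_nonneg (ξ j ω)) hi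
      calc |ξ i ω| = Real.sqrt ((ξ i ω) ^ 2) := (Real.sqrt_sq_eq_abs _).symm
        _ ≤ Real.sqrt (S ω) := Real.sqrt_le_sqrt h1
  have hηint : ∀ i ∈ Finset.Icc 1 n, Integrable (η i) μ := by
    intro i hi
    refine (integrable_const (1 : ℝ)).mono' (hηm i).aestronglyMeasurable ?_
    exact Filter.Eventually.of_forall fun ω => by
      simpa [Real.norm_eq_abs] using hηb i hi ω
  have hη2 : ∀ i ω, (η i ω) ^ 2 = (ξ i ω) ^ 2 / S ω := by
    intro i ω
    rw [hη, div_pow, Real.sq_sqrt (hSnn ω)]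
  -- the key flip lemma
  have key : ∀ (i : ℕ), i ∈ Finset.Icc 1 n → ∀ (hin : i < n + 1)
      (G : (Fin (n+1) → ℝ) → ℝ), Measurable G →
      ∀ A : Set Ω, MeasurableSet[ℱ (i-1)] A →
      ∫ ω in A, G (fun k : Fin (n+1) => ξ (k : ℕ) ω) ∂μ
        = ∫ ω in A, G (Function.update (fun k : Fin (n+1) => ξ (k : ℕ) ω)
            (⟨i, hin⟩ : Fin (n+1)) (-(ξ i ω))) ∂μ := by
    intro i hi hin G hG A hA
    obtain ⟨hi1, hi2⟩ := Finset.mem_Icc.mp hi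
    set i' : Fin (n+1) := ⟨i, hin⟩ with hi'
    set f : Ω → (Fin (n+1) → ℝ) := fun ω k => ξ (k : ℕ) ω with hf
    have hfm : Measurable f := measurable_pi_lambda _ fun k => hmeas _
    set T : (Fin (n+1) → ℝ) → (Fin (n+1) → ℝ) :=
      fun x => Function.update x i' (-(x i')) with hT
    have hTm : Measurable T := by
      refine measurable_pi_lambda _ fun k => ?_
      by_cases hk : k = i'
      · subst hk; simp only [hT, Function.update_self]
        exact (measurable_pi_apply _).neg
      · simp only [hT, Function.update_of_ne hk]
        exact measurable_pi_apply _
    have hcast : ∀ k : ℕ, k ≤ n → ((k : Fin (n+1)) : ℕ) = k := fun k hk => by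
      rw [Fin.val_natCast]; exact Nat.mod_eq_of_lt (by omega)
    set ξ' : ℕ → Ω → ℝ := fun j => if j = i then (fun ω => -ξ i ω) else ξ j with hξ'
    have hξ'm : ∀ j, Measurable (ξ' j) := by
      intro j; rw [hξ']; dsimp only; split_ifs
      · exact (hmeas i).neg
      · exact hmeas j
    have hξ'indep : iIndepFun ξ' μ := by
      have h := hindep.comp (mγ := fun _ => (inferInstance : MeasurableSpace ℝ)) (fun j => if j = i then (fun x : ℝ => -x) else id)
        (fun j => by by_cases hj : j = i <;> simp [hj, measurable_neg, measurable_id])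
      have he : (fun j => (if j = i then (fun x : ℝ => -x) else id) ∘ ξ j) = ξ' := by
        funext j ω
        by_cases hj : j = i <;> simp [hξ', hj]
      rwa [he] at h
    have hmarg : ∀ j : ℕ, Measure.map (ξ' j) μ = Measure.map (ξ j) μ := by
      intro j; rw [hξ']; dsimp only; split_ifs with h
      · rw [h]; exact (hsymm i hi).symm
      · rfl
    have hmap : Measure.map (fun ω => T (f ω)) μ = Measure.map f μ := by
      have hTf : (fun ω => T (f ω)) = fun ω (k : Fin (n+1)) => ξ' (k : ℕ) ω := by
        funext ω k
        rw [hT, hf]; dsimp only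
        rw [Function.update_apply]
        by_cases hk : k = i'
        · have hki : (k : ℕ) = i := by rw [hk, hi']
          rw [if_pos hk, hξ']; dsimp only
          rw [hki, if_pos rfl]
        · have hki : (k : ℕ) ≠ i := by
            intro hc; exact hk (Fin.ext (by rw [hc, hi']))
          rw [if_neg hk, hξ']; dsimp only
          rw [if_neg hki]
      rw [hTf, hf, joint_law μ (n+1) ξ' hξ'm hξ'indep, joint_law μ (n+1) ξ hmeas hindep]
      congr 1
      funext k
      exact hmarg _
    have hcomap : ℱ (i - 1) = (mSig n i).comap f := by
      rw [hℱ, mSig, MeasurableSpace.comap_sup]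
      congr 1
      · rw [MeasurableSpace.comap_iSup]
        refine iSup_congr fun k => ?_
        rw [MeasurableSpace.comap_iSup]
        refine iSup_congr fun hk => ?_
        rw [MeasurableSpace.comap_comp]
        congr 1
        funext ω
        simp only [Function.comp_apply, hf]
        rw [hcast k (by have := (Finset.mem_Icc.mp hk).2; omega)]
      · rw [MeasurableSpace.comap_iSup]
        refine iSup_congr fun j => ?_
        rw [MeasurableSpace.comap_iSup]
        refine iSup_congr fun hj => ?_
        rw [MeasurableSpace.comap_comp]
        congr 1
        funext ω
        simp only [Function.comp_apply, hf]
        rw [hcast j (Finset.mem_Icc.mp hj).2]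
    have hm'le : mSig n i ≤ MeasurableSpace.pi := by
      rw [mSig]
      refine sup_le (iSup_le fun k => iSup_le fun _ => Measurable.comap_le (measurable_pi_apply _))
        (iSup_le fun j => iSup_le fun _ => Measurable.comap_le ((measurable_pi_apply _).pow_const 2))
    have hTinv : ∀ B : Set (Fin (n+1) → ℝ), MeasurableSet[mSig n i] B → T ⁻¹' B = B := by
      have hle : mSig n i ≤ invSig T := by
        rw [mSig]
        refine sup_le (iSup_le fun k => iSup_le fun hk => ?_)
          (iSup_le fun j => iSup_le fun hj => ?_)
        · rintro B ⟨C, hC, rfl⟩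
          show T ⁻¹' ((fun x : Fin (n+1) → ℝ => x (k : Fin (n+1))) ⁻¹' C) = _
          have h : ∀ x : Fin (n+1) → ℝ, T x (k : Fin (n+1)) = x (k : Fin (n+1)) := by
            intro x
            rw [hT]; dsimp only
            refine Function.update_of_ne ?_ _ _
            intro hc
            have h1 : ((k : Fin (n+1)) : ℕ) = i := by rw [hc, hi']
            have h2 := (Finset.mem_Icc.mp hk).2
            rw [hcast k (by omega)] at h1
            omega
          ext x
          simp [h x]
        · rintro B ⟨C, hC, rfl⟩
          show T ⁻¹' ((fun x : Fin (n+1) → ℝ => (x (j : Fin (n+1))) ^ 2) ⁻¹' C) = _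
          have h : ∀ x : Fin (n+1) → ℝ, (T x (j : Fin (n+1))) ^ 2 = (x (j : Fin (n+1))) ^ 2 := by
            intro x
            rw [hT]; dsimp only
            rw [Function.update_apply]
            split_ifs with h'
            · rw [neg_sq, ← h']
            · rfl
          ext x
          simp [h x]
      exact fun B hB => hle B hB
    rw [hcomap] at hA
    obtain ⟨B, hB, rfl⟩ := hA
    have hBpi : MeasurableSet B := hm'le B hB
    calc ∫ ω in f ⁻¹' B, G (f ω) ∂μ
        = ∫ x in B, G x ∂(Measure.map f μ) :=
          (setIntegral_map hBpi hG.aestronglyMeasurable hfm.aemeasurable).symm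
      _ = ∫ x in B, G x ∂(Measure.map (fun ω => T (f ω)) μ) := by rw [hmap]
      _ = ∫ ω in (fun ω => T (f ω)) ⁻¹' B, G (T (f ω)) ∂μ :=
          setIntegral_map hBpi hG.aestronglyMeasurable (hTm.comp hfm).aemeasurable
      _ = ∫ ω in f ⁻¹' B, G (T (f ω)) ∂μ := by
          rw [show (fun ω => T (f ω)) ⁻¹' B = f ⁻¹' (T ⁻¹' B) from rfl, hTinv B hB]
  -- specialization of the flip lemma to η and to indicator functions
  have hsetup : ∀ (i : ℕ), i ∈ Finset.Icc 1 n → ∀ (hin : i < n + 1),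
      ∃ G : (Fin (n+1) → ℝ) → ℝ, Measurable G ∧
        (∀ ω, G (fun k : Fin (n+1) => ξ (k : ℕ) ω) = η i ω) ∧
        (∀ ω, G (Function.update (fun k : Fin (n+1) => ξ (k : ℕ) ω)
            (⟨i, hin⟩ : Fin (n+1)) (-(ξ i ω))) = -η i ω) := by
    intro i hi hin
    have hcast : ∀ k : ℕ, k ≤ n → ((k : Fin (n+1)) : ℕ) = k := fun k hk => by
      rw [Fin.val_natCast]; exact Nat.mod_eq_of_lt (by omega)
    refine ⟨fun x => x ⟨i, hin⟩ / Real.sqrt (∑ j ∈ Finset.Icc 1 n, (x ((j : Fin (n+1)))) ^ 2),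
      ?_, ?_, ?_⟩
    · have h1 : Measurable (fun x : Fin (n+1) → ℝ => x ⟨i, hin⟩) := measurable_pi_apply _
      have h2 : Measurable (fun x : Fin (n+1) → ℝ =>
          ∑ j ∈ Finset.Icc 1 n, (x ((j : Fin (n+1)))) ^ 2) := by
        apply Finset.measurable_sum
        intro j _
        exact (measurable_pi_apply ((j : Fin (n+1)))).pow_const 2
      exact h1.div h2.sqrt
    · intro ω
      dsimp only
      have hsum : ∑ j ∈ Finset.Icc 1 n, (ξ ((j : Fin (n+1)) : ℕ) ω) ^ 2 = S ω :=
        Finset.sum_congr rfl fun j hj => by rw [hcast j (Finset.mem_Icc.mp hj).2]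
      rw [hsum, hη]
    · intro ω
      dsimp only
      rw [Function.update_self]
      have hsum2 : ∑ j ∈ Finset.Icc 1 n,
          (Function.update (fun k : Fin (n+1) => ξ (k : ℕ) ω) (⟨i, hin⟩ : Fin (n+1))
            (-(ξ i ω)) ((j : Fin (n+1)))) ^ 2 = S ω := by
        refine Finset.sum_congr rfl fun j hj => ?_
        rw [Function.update_apply]
        split_ifs with h
        · have hji : j = i := by
            have h2 := congrArg (fun t : Fin (n+1) => (t : ℕ)) h
            simpa [hcast j (Finset.mem_Icc.mp hj).2] using h2
          rw [neg_sq, hji]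
        · rw [hcast j (Finset.mem_Icc.mp hj).2]
      rw [hsum2, hη, neg_div]
  refine ⟨?_, ?_, ?_⟩
  · -- martingale differences
    intro i hi
    obtain ⟨hi1, hi2⟩ := Finset.mem_Icc.mp hi
    have hin : i < n + 1 := by omega
    obtain ⟨G, hGm, hGf, hGT⟩ := hsetup i hi hin
    have hzero : ∀ A : Set Ω, MeasurableSet[ℱ (i-1)] A → ∫ ω in A, η i ω ∂μ = 0 := by
      intro A hA
      have h := key i hi hin G hGm A hA
      simp only [hGf, hGT] at h
      rw [integral_neg] at h
      linarith
    have hm := hm0 (i-1)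
    haveI := hSF (i-1)
    refine (ae_eq_condExp_of_forall_setIntegral_eq hm (hηint i hi)
      (fun s _ _ => (integrable_zero _ _ _).integrableOn)
      (fun s hs _ => by rw [hzero s hs]; simp)
      (StronglyMeasurable.aestronglyMeasurable
        (@stronglyMeasurable_zero Ω ℝ (ℱ (i-1)) _ _))).symm
  · -- conditional symmetry
    intro i hi y
    obtain ⟨hi1, hi2⟩ := Finset.mem_Icc.mp hi
    have hin : i < n + 1 := by omega
    obtain ⟨G, hGm, hGf, hGT⟩ := hsetup i hi hin
    have hm := hm0 (i-1)
    haveI := hSF (i-1)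
    have hu_meas : MeasurableSet {ω' | η i ω' > y} :=
      measurableSet_lt measurable_const (hηm i)
    have hv_meas : MeasurableSet {ω' | -η i ω' > y} :=
      measurableSet_lt measurable_const (hηm i).neg
    have hu_int : Integrable (Set.indicator {ω' | η i ω' > y} (fun _ => (1 : ℝ))) μ :=
      (integrable_const 1).indicator hu_meas
    have hv_int : Integrable (Set.indicator {ω' | -η i ω' > y} (fun _ => (1 : ℝ))) μ :=
      (integrable_const 1).indicator hv_meas
    have hGum : Measurable (Set.indicator {x : Fin (n+1) → ℝ | G x > y} (fun _ => (1 : ℝ))) :=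
      measurable_const.indicator (measurableSet_lt measurable_const hGm)
    have hGuf : ∀ ω, Set.indicator {x : Fin (n+1) → ℝ | G x > y} (fun _ => (1 : ℝ))
        (fun k : Fin (n+1) => ξ (k : ℕ) ω)
        = Set.indicator {ω' | η i ω' > y} (fun _ => (1 : ℝ)) ω := by
      intro ω
      simp only [Set.indicator_apply, Set.mem_setOf_eq, hGf ω]
    have hGuT : ∀ ω, Set.indicator {x : Fin (n+1) → ℝ | G x > y} (fun _ => (1 : ℝ))
        (Function.update (fun k : Fin (n+1) => ξ (k : ℕ) ω) (⟨i, hin⟩ : Fin (n+1)) (-(ξ i ω)))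
        = Set.indicator {ω' | -η i ω' > y} (fun _ => (1 : ℝ)) ω := by
      intro ω
      simp only [Set.indicator_apply, Set.mem_setOf_eq, hGT ω]
    have hflip : ∀ s : Set Ω, MeasurableSet[ℱ (i-1)] s →
        ∫ ω in s, Set.indicator {ω' | η i ω' > y} (fun _ => (1 : ℝ)) ω ∂μ
          = ∫ ω in s, Set.indicator {ω' | -η i ω' > y} (fun _ => (1 : ℝ)) ω ∂μ := by
      intro s hs
      have h := key i hi hin _ hGum s hs
      simp only [hGuf, hGuT] at h
      exact h
    refine (ae_eq_condExp_of_forall_setIntegral_eq hm hu_int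
      (fun s _ _ => integrable_condExp.integrableOn)
      (fun s hs _ => by
        rw [setIntegral_condExp hm hv_int hs]
        exact (hflip s hs).symm)
      (StronglyMeasurable.aestronglyMeasurable stronglyMeasurable_condExp)).symm
  · -- the sum of squares
    have hcond : ∀ i ∈ Finset.Icc 1 n,
        μ[(fun ω' => (η i ω') ^ 2) | ℱ (i-1)] = fun ω' => (η i ω') ^ 2 := by
      intro i hi
      haveI := hSF (i-1)
      refine condExp_of_stronglyMeasurable (hm0 (i-1)) ?_ ?_
      · have hfun : (fun ω' => (η i ω') ^ 2) = fun ω' => (ξ i ω') ^ 2 / S ω' :=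
          funext fun ω' => hη2 i ω'
        rw [hfun]
        have hb : ∀ j ∈ Finset.Icc 1 n, Measurable[ℱ (i-1)] (fun ω' => (ξ j ω') ^ 2) := by
          intro j hj
          have h1 : MeasurableSpace.comap (fun ω' => (ξ j ω') ^ 2)
              (inferInstance : MeasurableSpace ℝ) ≤ ℱ (i-1) := by
            rw [hℱ]
            exact le_sup_of_le_right (le_iSup₂ (f := fun j (_ : j ∈ Finset.Icc 1 n) =>
              MeasurableSpace.comap (fun ω => (ξ j ω) ^ 2)
                (inferInstance : MeasurableSpace ℝ)) j hj)
          exact (measurable_iff_comap_le.mpr le_rfl).mono h1 le_rfl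
        have hSm : Measurable[ℱ (i-1)] S := by
          rw [hS]
          exact Finset.measurable_sum _ fun j hj => hb j hj
        exact ((hb i hi).div hSm).stronglyMeasurable
      · refine (integrable_const (1 : ℝ)).mono'
          ((hηm i).pow_const 2).aestronglyMeasurable ?_
        refine Filter.Eventually.of_forall fun ω => ?_
        rw [Real.norm_eq_abs, abs_pow]
        nlinarith [hηb i hi ω, abs_nonneg (η i ω)]
    refine Filter.Eventually.of_forall fun ω hpos => ?_
    constructor
    · exact Finset.sum_congr rfl fun i hi => by rw [hcond i hi]
    · have h1 : ∑ i ∈ Finset.Icc 1 n, (η i ω) ^ 2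
          = (∑ i ∈ Finset.Icc 1 n, (ξ i ω) ^ 2) / S ω := by
        rw [Finset.sum_div]
        exact Finset.sum_congr rfl fun i _ => hη2 i ω
      rw [h1]
      exact div_self (ne_of_gt hpos)
end
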